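/- Let q_1,...,q_n ∈ (0,1] and d_1 ≤ ... ≤ d_n ≥ 0. Suppose a customer at sorted position s with distance d' is moved to position t > s with new distance d ≥ d' (i.e., distances at positions s+1,...,t shift down by one and the customer's own distance increases from d' to d), while all other customer–probability pairs remain unchanged. Then the expected maximum service cost F = ∑_{u=1}^{n} q_u d_u ∏_{v=u+1}^{n}(1-q_v) does not decrease. -/

import Mathlib

open Finset

lemma shift_sum9 (f : ℕ → ℝ) (a b : ℕ) :
    ∑ v ∈ Ioc (a+1) (b+1), f v = ∑ v ∈ Ioc a b, f (v+1) := by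
  rw [← map_add_right_Ioc a b 1, Finset.sum_map]
  rfl

lemma shift_prod9 (f : ℕ → ℝ) (a b : ℕ) :
    ∏ v ∈ Ioc (a+1) (b+1), f v = ∏ v ∈ Ioc a b, f (v+1) := by
  rw [← map_add_right_Ioc a b 1, Finset.prod_map]
  rfl

lemma tele9 (g : ℕ → ℝ) (a : ℕ) :
    ∀ b, ∑ u ∈ Ioc a b, g u * ∏ v ∈ Ioc u b, (1 - g v)
      = 1 - ∏ v ∈ Ioc a b, (1 - g v)
  | 0 => by simp
  | (b+1) => by
    rcases le_or_gt a b with h | h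
    · rw [Finset.sum_Ioc_succ_top h, Finset.prod_Ioc_succ_top h]
      have h1 : ∀ u ∈ Ioc a b, g u * ∏ v ∈ Ioc u (b+1), (1 - g v)
          = (g u * ∏ v ∈ Ioc u b, (1 - g v)) * (1 - g (b+1)) := by
        intro u hu
        rw [Finset.prod_Ioc_succ_top (by simp at hu; omega)]
        ring
      rw [Finset.sum_congr rfl h1, ← Finset.sum_mul, tele9 g a b]
      simp only [Finset.Ioc_self, Finset.prod_empty, mul_one]
      ring
    · have he : Ioc a (b+1) = ∅ := Finset.Ioc_eq_empty (by omega)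
      simp [he]

theorem stmt9 (n s t : ℕ) (hs : 1 ≤ s) (hst : s ≤ t) (htn : t ≤ n)
    (d q d' q' : ℕ → ℝ)
    (hq : ∀ i ∈ Icc 1 n, 0 < q i ∧ q i ≤ 1)
    (hq' : ∀ i ∈ Icc 1 n, 0 < q' i ∧ q' i ≤ 1)
    (hd0 : ∀ i ∈ Icc 1 n, 0 ≤ d i)
    (hd'0 : ∀ i ∈ Icc 1 n, 0 ≤ d' i)
    (hdmono : ∀ i ∈ Icc 1 n, ∀ j ∈ Icc 1 n, i ≤ j → d i ≤ d j)
    (hd'mono : ∀ i ∈ Icc 1 n, ∀ j ∈ Icc 1 n, i ≤ j → d' i ≤ d' j)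
    (hqs : q' s = q t) (hds : d' s ≤ d t)
    (hmid : ∀ u, s + 1 ≤ u → u ≤ t → d' u = d (u - 1) ∧ q' u = q (u - 1))
    (hout : ∀ u, u < s ∨ t < u → d' u = d u ∧ q' u = q u) :
    (∑ u ∈ Icc 1 n, q' u * d' u * ∏ v ∈ Ioc u n, (1 - q' v))
      ≤ ∑ u ∈ Icc 1 n, q u * d u * ∏ v ∈ Ioc u n, (1 - q v) := by
  obtain ⟨a, rfl⟩ : ∃ a, s = a + 1 := ⟨s - 1, by omega⟩
  obtain ⟨b, rfl⟩ : ∃ b, t = b + 1 := ⟨t - 1, by omega⟩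
  have hab : a ≤ b := by omega
  have hbn : b + 1 ≤ n := htn
  have eIcc : Icc 1 n = Ioc 0 n := by ext x; simp; omega
  rw [eIcc]
  have hfq : ∀ v, 1 ≤ v → v ≤ n → 0 ≤ 1 - q v := by
    intro v h1 h2
    have := (hq v (by simp; omega)).2
    linarith
  -- the tail products coincide
  have e3 : ∏ v ∈ Ioc (b+1) n, (1 - q' v) = ∏ v ∈ Ioc (b+1) n, (1 - q v) :=
    Finset.prod_congr rfl fun v hv => by
      simp only [mem_Ioc] at hv
      rw [(hout v (Or.inr (by omega))).2]
  -- shifted products in the middle block coincide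
  have hshiftprod : ∀ w, a ≤ w → ∏ v ∈ Ioc (w+1) (b+1), (1 - q' v) = ∏ v ∈ Ioc w b, (1 - q v) := by
    intro w hw
    rw [shift_prod9]
    refine Finset.prod_congr rfl fun v hv => ?_
    simp only [mem_Ioc] at hv
    rw [(hmid (v+1) (by omega) (by omega)).2]
    simp
  -- splitting of sums
  have splitsum : ∀ f : ℕ → ℝ, ∑ u ∈ Ioc 0 n, f u
      = ∑ u ∈ Ioc 0 a, f u + ∑ u ∈ Ioc a (b+1), f u + ∑ u ∈ Ioc (b+1) n, f u := by
    intro f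
    rw [add_assoc, Finset.sum_Ioc_consecutive f (by omega : a ≤ b+1) hbn,
        Finset.sum_Ioc_consecutive f (Nat.zero_le a) (by omega : a ≤ n)]
  -- part 1 : initial segment coincides
  have part1 : ∑ u ∈ Ioc 0 a, q' u * d' u * ∏ v ∈ Ioc u n, (1 - q' v)
      = ∑ u ∈ Ioc 0 a, q u * d u * ∏ v ∈ Ioc u n, (1 - q v) := by
    refine Finset.sum_congr rfl fun u hu => ?_
    simp only [mem_Ioc] at hu
    rw [(hout u (Or.inl (by omega))).1, (hout u (Or.inl (by omega))).2]
    congr 1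
    have split : ∀ f : ℕ → ℝ, ∏ v ∈ Ioc u n, f v
        = (∏ v ∈ Ioc u a, f v) * (∏ v ∈ Ioc a (b+1), f v) * ∏ v ∈ Ioc (b+1) n, f v := by
      intro f
      rw [Finset.prod_Ioc_consecutive f (by omega : u ≤ a) (by omega : a ≤ b+1),
          Finset.prod_Ioc_consecutive f (by omega : u ≤ b+1) hbn]
    rw [split (fun v => 1 - q' v), split (fun v => 1 - q v)]
    have e1 : ∏ v ∈ Ioc u a, (1 - q' v) = ∏ v ∈ Ioc u a, (1 - q v) :=
      Finset.prod_congr rfl fun v hv => by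
        simp only [mem_Ioc] at hv
        rw [(hout v (Or.inl (by omega))).2]
    have e2 : ∏ v ∈ Ioc a (b+1), (1 - q' v) = ∏ v ∈ Ioc a (b+1), (1 - q v) := by
      rw [← Finset.prod_Ioc_consecutive (fun v => 1 - q' v) (Nat.le_succ a) (by omega : a+1 ≤ b+1),
          Nat.Ioc_succ_singleton, Finset.prod_singleton, hshiftprod a le_rfl, hqs,
          Finset.prod_Ioc_succ_top hab]
      ring
    rw [e1, e2, e3]
  -- part 3 : final segment coincides
  have part3 : ∑ u ∈ Ioc (b+1) n, q' u * d' u * ∏ v ∈ Ioc u n, (1 - q' v)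
      = ∑ u ∈ Ioc (b+1) n, q u * d u * ∏ v ∈ Ioc u n, (1 - q v) := by
    refine Finset.sum_congr rfl fun u hu => ?_
    simp only [mem_Ioc] at hu
    rw [(hout u (Or.inr (by omega))).1, (hout u (Or.inr (by omega))).2]
    congr 1
    refine Finset.prod_congr rfl fun v hv => ?_
    simp only [mem_Ioc] at hv
    rw [(hout v (Or.inr (by omega))).2]
  -- part 2 : middle block inequality
  have mid : ∑ u ∈ Ioc a (b+1), q' u * d' u * ∏ v ∈ Ioc u n, (1 - q' v)
      ≤ ∑ u ∈ Ioc a (b+1), q u * d u * ∏ v ∈ Ioc u n, (1 - q v) := by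
    have hLmid : ∑ u ∈ Ioc a (b+1), q' u * d' u * ∏ v ∈ Ioc u n, (1 - q' v)
        = q (b+1) * d' (a+1) * ((∏ v ∈ Ioc a b, (1 - q v)) * ∏ v ∈ Ioc (b+1) n, (1 - q v))
          + (∑ w ∈ Ioc a b, q w * d w * ∏ v ∈ Ioc w b, (1 - q v)) * ∏ v ∈ Ioc (b+1) n, (1 - q v) := by
      rw [← Finset.sum_Ioc_consecutive _ (Nat.le_succ a) (by omega : a+1 ≤ b+1),
          Nat.Ioc_succ_singleton, Finset.sum_singleton, shift_sum9, Finset.sum_mul]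
      have hsp : ∏ v ∈ Ioc (a+1) n, (1 - q' v)
          = (∏ v ∈ Ioc a b, (1 - q v)) * ∏ v ∈ Ioc (b+1) n, (1 - q v) := by
        rw [← Finset.prod_Ioc_consecutive (fun v => 1 - q' v) (by omega : a+1 ≤ b+1) hbn,
            hshiftprod a le_rfl, e3]
      have hterm : ∀ w ∈ Ioc a b, q' (w+1) * d' (w+1) * ∏ v ∈ Ioc (w+1) n, (1 - q' v)
          = q w * d w * (∏ v ∈ Ioc w b, (1 - q v)) * ∏ v ∈ Ioc (b+1) n, (1 - q v) := by
        intro w hw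
        simp only [mem_Ioc] at hw
        rw [(hmid (w+1) (by omega) (by omega)).1, (hmid (w+1) (by omega) (by omega)).2]
        simp only [Nat.add_sub_cancel]
        rw [← Finset.prod_Ioc_consecutive (fun v => 1 - q' v) (by omega : w+1 ≤ b+1) hbn,
            hshiftprod w (by omega), e3]
        ring
      rw [Finset.sum_congr rfl hterm, hqs, hsp]
    have hRmid : ∑ u ∈ Ioc a (b+1), q u * d u * ∏ v ∈ Ioc u n, (1 - q v)
        = (∑ w ∈ Ioc a b, q w * d w * ∏ v ∈ Ioc w b, (1 - q v))
            * ((1 - q (b+1)) * ∏ v ∈ Ioc (b+1) n, (1 - q v))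
          + q (b+1) * d (b+1) * ∏ v ∈ Ioc (b+1) n, (1 - q v) := by
      rw [Finset.sum_Ioc_succ_top hab, Finset.sum_mul]
      have hterm : ∀ u ∈ Ioc a b, q u * d u * ∏ v ∈ Ioc u n, (1 - q v)
          = q u * d u * (∏ v ∈ Ioc u b, (1 - q v))
              * ((1 - q (b+1)) * ∏ v ∈ Ioc (b+1) n, (1 - q v)) := by
        intro u hu
        simp only [mem_Ioc] at hu
        rw [← Finset.prod_Ioc_consecutive (fun v => 1 - q v) (by omega : u ≤ b+1) hbn,
            Finset.prod_Ioc_succ_top (by omega : u ≤ b)]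
        ring
      rw [Finset.sum_congr rfl hterm]
    rw [hLmid, hRmid]
    have hP0 : 0 ≤ ∏ v ∈ Ioc (b+1) n, (1 - q v) :=
      Finset.prod_nonneg fun v hv => by
        simp only [mem_Ioc] at hv
        exact hfq v (by omega) (by omega)
    have hQ0 : 0 ≤ ∏ v ∈ Ioc a b, (1 - q v) :=
      Finset.prod_nonneg fun v hv => by
        simp only [mem_Ioc] at hv
        exact hfq v (by omega) (by omega)
    have hqb : 0 ≤ q (b+1) := le_of_lt (hq (b+1) (by simp; omega)).1
    have hT : (∑ w ∈ Ioc a b, q w * d w * ∏ v ∈ Ioc w b, (1 - q v))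
        ≤ d (b+1) * (1 - ∏ v ∈ Ioc a b, (1 - q v)) := by
      have step : ∀ w ∈ Ioc a b, q w * d w * ∏ v ∈ Ioc w b, (1 - q v)
          ≤ d (b+1) * (q w * ∏ v ∈ Ioc w b, (1 - q v)) := by
        intro w hw
        simp only [mem_Ioc] at hw
        have hdw : d w ≤ d (b+1) :=
          hdmono w (by simp; omega) (b+1) (by simp; omega) (by omega)
        have hqw : 0 ≤ q w := le_of_lt (hq w (by simp; omega)).1
        have hpw : 0 ≤ ∏ v ∈ Ioc w b, (1 - q v) :=
          Finset.prod_nonneg fun v hv => by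
            simp only [mem_Ioc] at hv
            exact hfq v (by omega) (by omega)
        nlinarith [mul_nonneg (mul_nonneg hqw hpw) (sub_nonneg.2 hdw)]
      calc (∑ w ∈ Ioc a b, q w * d w * ∏ v ∈ Ioc w b, (1 - q v))
          ≤ ∑ w ∈ Ioc a b, d (b+1) * (q w * ∏ v ∈ Ioc w b, (1 - q v)) :=
            Finset.sum_le_sum step
        _ = d (b+1) * (1 - ∏ v ∈ Ioc a b, (1 - q v)) := by
            rw [← Finset.mul_sum, tele9 q a b]
    have key : d' (a+1) * (∏ v ∈ Ioc a b, (1 - q v))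
        + (∑ w ∈ Ioc a b, q w * d w * ∏ v ∈ Ioc w b, (1 - q v)) ≤ d (b+1) := by
      have h1 : d' (a+1) * (∏ v ∈ Ioc a b, (1 - q v)) ≤ d (b+1) * (∏ v ∈ Ioc a b, (1 - q v)) :=
        mul_le_mul_of_nonneg_right hds hQ0
      nlinarith
    nlinarith [mul_nonneg (mul_nonneg hqb (sub_nonneg.2 key)) hP0]
  calc (∑ u ∈ Ioc 0 n, q' u * d' u * ∏ v ∈ Ioc u n, (1 - q' v))
      = ∑ u ∈ Ioc 0 a, q' u * d' u * ∏ v ∈ Ioc u n, (1 - q' v)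
        + ∑ u ∈ Ioc a (b+1), q' u * d' u * ∏ v ∈ Ioc u n, (1 - q' v)
        + ∑ u ∈ Ioc (b+1) n, q' u * d' u * ∏ v ∈ Ioc u n, (1 - q' v) := splitsum _
    _ ≤ ∑ u ∈ Ioc 0 a, q u * d u * ∏ v ∈ Ioc u n, (1 - q v)
        + ∑ u ∈ Ioc a (b+1), q u * d u * ∏ v ∈ Ioc u n, (1 - q v)
        + ∑ u ∈ Ioc (b+1) n, q u * d u * ∏ v ∈ Ioc u n, (1 - q v) := by
          rw [part1, part3]
          exact add_le_add_left (add_le_add_right mid _) _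
    _ = ∑ u ∈ Ioc 0 n, q u * d u * ∏ v ∈ Ioc u n, (1 - q v) := (splitsum _).symm
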